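/- At fixed points of the Sinkhorn iteration, the coupling P_{ij} = e^{(f_i+g_j−C_{ij})/ε} satisfies both marginal constraints P𝟙 = a and Pᵀ𝟙 = b, and (f,g) is a global maximizer of the concave dual objective E. -/

import Mathlib

open Finset Real

/-- Entropic dual objective E(f,g) = ⟨f,a⟩ + ⟨g,b⟩ − ε Σ_{ij} e^{(f_i+g_j−C_{ij})/ε}. -/
noncomputable def dualObjC {n m : ℕ} (ε : ℝ) (a : Fin n → ℝ) (b : Fin m → ℝ)
    (C : Matrix (Fin n) (Fin m) ℝ) (f : Fin n → ℝ) (g : Fin m → ℝ) : ℝ :=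
  (∑ i, f i * a i) + (∑ j, g j * b j) -
    ε * ∑ i, ∑ j, Real.exp ((f i + g j - C i j) / ε)

theorem stmt17 {n m : ℕ} (ε : ℝ) (hε : 0 < ε)
    (a : Fin n → ℝ) (b : Fin m → ℝ)
    (ha : ∀ i, 0 < a i) (hb : ∀ j, 0 < b j)
    (hasum : ∑ i, a i = 1) (hbsum : ∑ j, b j = 1)
    (C : Matrix (Fin n) (Fin m) ℝ)
    (f : Fin n → ℝ) (g : Fin m → ℝ)
    (hfixf : ∀ i, f i = ε * Real.log (a i) -
      ε * Real.log (∑ j, Real.exp ((g j - C i j) / ε)))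
    (hfixg : ∀ j, g j = ε * Real.log (b j) -
      ε * Real.log (∑ i, Real.exp ((f i - C i j) / ε))) :
    (∀ i, ∑ j, Real.exp ((f i + g j - C i j) / ε) = a i) ∧
    (∀ j, ∑ i, Real.exp ((f i + g j - C i j) / ε) = b j) ∧
    (∀ (f' : Fin n → ℝ) (g' : Fin m → ℝ),
      dualObjC ε a b C f' g' ≤ dualObjC ε a b C f g) := by
  have hm : m ≠ 0 := by rintro rfl; simpa using hbsum
  have hn : n ≠ 0 := by rintro rfl; simpa using hasum
  haveI : Nonempty (Fin m) := Fin.pos_iff_nonempty.mp (Nat.pos_of_ne_zero hm)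
  haveI : Nonempty (Fin n) := Fin.pos_iff_nonempty.mp (Nat.pos_of_ne_zero hn)
  have hεne : ε ≠ 0 := ne_of_gt hε
  have hrow : ∀ i, ∑ j, Real.exp ((f i + g j - C i j) / ε) = a i := by
    intro i
    set S := ∑ j, Real.exp ((g j - C i j) / ε) with hSdef
    have hS : 0 < S :=
      Finset.sum_pos (fun j _ => Real.exp_pos _) Finset.univ_nonempty
    have hfi : Real.exp (f i / ε) = a i / S := by
      have h1 : f i / ε = Real.log (a i) - Real.log S := by
        rw [hfixf i]; field_simp; rw [← hSdef]
      rw [h1, Real.exp_sub, Real.exp_log (ha i), Real.exp_log hS]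
    calc ∑ j, Real.exp ((f i + g j - C i j) / ε)
        = ∑ j, Real.exp (f i / ε) * Real.exp ((g j - C i j) / ε) := by
          refine Finset.sum_congr rfl fun j _ => ?_
          rw [← Real.exp_add]; congr 1; field_simp; ring
      _ = Real.exp (f i / ε) * S := by rw [← Finset.mul_sum]
      _ = a i := by rw [hfi]; field_simp
  have hcol : ∀ j, ∑ i, Real.exp ((f i + g j - C i j) / ε) = b j := by
    intro j
    set S := ∑ i, Real.exp ((f i - C i j) / ε) with hSdef
    have hS : 0 < S :=
      Finset.sum_pos (fun i _ => Real.exp_pos _) Finset.univ_nonempty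
    have hgj : Real.exp (g j / ε) = b j / S := by
      have h1 : g j / ε = Real.log (b j) - Real.log S := by
        rw [hfixg j]; field_simp; rw [← hSdef]
      rw [h1, Real.exp_sub, Real.exp_log (hb j), Real.exp_log hS]
    calc ∑ i, Real.exp ((f i + g j - C i j) / ε)
        = ∑ i, Real.exp (g j / ε) * Real.exp ((f i - C i j) / ε) := by
          refine Finset.sum_congr rfl fun i _ => ?_
          rw [← Real.exp_add]; congr 1; field_simp; ring
      _ = Real.exp (g j / ε) * S := by rw [← Finset.mul_sum]
      _ = b j := by rw [hgj]; field_simp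
  have htot : ∑ i, ∑ j, Real.exp ((f i + g j - C i j) / ε) = 1 := by
    rw [Finset.sum_congr rfl fun i _ => hrow i, hasum]
  refine ⟨hrow, hcol, fun f' g' => ?_⟩
  set P : Fin n → Fin m → ℝ := fun i j => Real.exp ((f i + g j - C i j) / ε) with hP
  have key : ∀ i j, P i j + P i j * (f' i - f i) / ε + P i j * (g' j - g j) / ε
      ≤ Real.exp ((f' i + g' j - C i j) / ε) := by
    intro i j
    have h1 : Real.exp ((f' i + g' j - C i j) / ε)
        = P i j * Real.exp ((f' i - f i + g' j - g j) / ε) := by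
      rw [hP, ← Real.exp_add]; congr 1; field_simp; ring
    have h2 := Real.add_one_le_exp ((f' i - f i + g' j - g j) / ε)
    have h3 : (0:ℝ) < P i j := Real.exp_pos _
    rw [h1]
    have := mul_le_mul_of_nonneg_left h2 (le_of_lt h3)
    calc P i j + P i j * (f' i - f i) / ε + P i j * (g' j - g j) / ε
        = P i j * ((f' i - f i + g' j - g j) / ε + 1) := by ring
      _ ≤ P i j * Real.exp ((f' i - f i + g' j - g j) / ε) := this
  have hsum1 : ∑ i, ∑ j, P i j * (f' i - f i) = ∑ i, (f' i - f i) * a i := by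
    refine Finset.sum_congr rfl fun i _ => ?_
    rw [← Finset.sum_mul, hrow i, mul_comm]
  have hsum2 : ∑ i, ∑ j, P i j * (g' j - g j) = ∑ j, (g' j - g j) * b j := by
    rw [Finset.sum_comm]
    refine Finset.sum_congr rfl fun j _ => ?_
    rw [← Finset.sum_mul, hcol j, mul_comm]
  have hineq : 1 + (∑ i, (f' i - f i) * a i) / ε + (∑ j, (g' j - g j) * b j) / ε
      ≤ ∑ i, ∑ j, Real.exp ((f' i + g' j - C i j) / ε) := by
    have hs := Finset.sum_le_sum (fun i (_ : i ∈ Finset.univ) =>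
      Finset.sum_le_sum (fun j (_ : j ∈ Finset.univ) => key i j))
    have hLHS : ∑ i, ∑ j, (P i j + P i j * (f' i - f i) / ε + P i j * (g' j - g j) / ε)
        = 1 + (∑ i, (f' i - f i) * a i) / ε + (∑ j, (g' j - g j) * b j) / ε := by
      simp only [Finset.sum_add_distrib, ← Finset.sum_div]
      rw [htot, hsum1, hsum2]
    rw [hLHS] at hs
    exact hs
  have hA : ∑ i, (f' i - f i) * a i = (∑ i, f' i * a i) - ∑ i, f i * a i := by
    rw [← Finset.sum_sub_distrib]; exact Finset.sum_congr rfl fun i _ => by ring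
  have hB : ∑ j, (g' j - g j) * b j = (∑ j, g' j * b j) - ∑ j, g j * b j := by
    rw [← Finset.sum_sub_distrib]; exact Finset.sum_congr rfl fun j _ => by ring
  unfold dualObjC
  rw [htot]
  have := mul_le_mul_of_nonneg_left hineq (le_of_lt hε)
  rw [hA, hB] at this
  have hexp : ε * (1 + ((∑ i, f' i * a i) - ∑ i, f i * a i) / ε
      + ((∑ j, g' j * b j) - ∑ j, g j * b j) / ε)
      = ε + ((∑ i, f' i * a i) - ∑ i, f i * a i)
      + ((∑ j, g' j * b j) - ∑ j, g j * b j) := by field_simp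
  rw [hexp] at this
  linarith
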